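/- Let $\phi:X\to(-\infty,+\infty]$ be approximately $\lambda$-convex with complete sublevel sets. Then $\phi$ is quadratically bounded from below: for every $o\in\mathrm{Dom}(\phi)$ and every $\kappa_o>-\lambda$, one has $\phi(x)+\frac{\kappa_o}2 d(x,o)^2\ge \phi(o)-\frac{(\phi(o)-m_o+\lambda^+/2)^2}{2(\lambda+\kappa_o)}-\frac{\lambda+\kappa_o}2$ for all $x\in X$, where $m_o:=\inf\{\phi(x):d(x,o)\le1\}>-\infty$. Moreover $x\mapsto\phi(x)-\frac\lambda2 d(x,o)^2$ is linearly bounded from below: $\phi(x)-\frac\lambda2 d(x,o)^2+(\phi(o)-m_o+\frac\lambda2)\,d(x,o)\ge m_o-\frac{\lambda^-}{2}$ for all $x$. -/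

import Mathlib

/-- `x` is a `(θ, ε)`-intermediate point between `x₀` and `x₁`. -/
def IsIntermediatePt {X : Type*} [MetricSpace X] (x₀ x₁ x : X) (θ ε : ℝ) : Prop :=
  dist x₀ x ^ 2 / θ + dist x x₁ ^ 2 / (1 - θ) ≤ dist x₀ x₁ ^ 2 * (1 + ε ^ 2 * θ * (1 - θ))

/-- `φ` is approximately `λ`-convex in `D`. -/
noncomputable def ApproxLambdaConvexOn {X : Type*} [MetricSpace X]
    (φ : X → EReal) (lam : ℝ) (D : Set X) : Prop :=
  ∀ x₀ ∈ D, ∀ x₁ ∈ D, φ x₀ ≠ ⊤ → φ x₁ ≠ ⊤ →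
    ∀ θ ∈ Set.Ioo (0:ℝ) 1, ∀ ε ∈ Set.Ioo (0:ℝ) 1, ∃ x ∈ D,
      IsIntermediatePt x₀ x₁ x θ ε ∧
      φ x ≤ (((1 - θ : ℝ)) : EReal) * φ x₀ + ((θ : ℝ) : EReal) * φ x₁ -
        (((lam - ε) / 2 * (θ * (1 - θ)) * dist x₀ x₁ ^ 2 : ℝ) : EReal)

set_option maxHeartbeats 1000000

lemma aux_dist {θ ε a b d : ℝ} (hθ0 : 0 < θ) (hθ1 : θ < 1) (hε0 : 0 < ε) (hε1 : ε < 1)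
    (ha : 0 ≤ a) (hb : 0 ≤ b) (hd : 0 ≤ d) (htri : d ≤ a + b)
    (hkey : a^2/θ + b^2/(1-θ) ≤ d^2*(1+ε^2*θ*(1-θ))) : a ≤ θ*d*(1+ε) := by
  have h1θ : 0 < 1 - θ := by linarith
  rcases le_or_gt a d with had | hda
  · have hb' : (d - a)^2 ≤ b^2 := by nlinarith
    have hkey2 : a^2/θ + (d-a)^2/(1-θ) ≤ d^2*(1+ε^2*θ*(1-θ)) := by
      have h2 : (d-a)^2/(1-θ) ≤ b^2/(1-θ) := by gcongr
      linarith
    rw [div_add_div _ _ (ne_of_gt hθ0) (ne_of_gt h1θ), div_le_iff₀ (by positivity)] at hkey2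
    have hc : (a - θ*d)^2 ≤ (ε*θ*(1-θ)*d)^2 := by nlinarith [hkey2]
    have h0 : 0 ≤ ε*θ*(1-θ)*d := by positivity
    have hc2 : a - θ*d ≤ ε*θ*(1-θ)*d := by nlinarith [hc, h0]
    have h4 : 0 ≤ ε*θ*θ*d := by positivity
    nlinarith [hc2, h4]
  · exfalso
    have hapos : 0 < a := lt_of_le_of_lt hd hda
    have ha2 : a^2/θ ≤ d^2*(1+ε^2*θ*(1-θ)) := by
      have : 0 ≤ b^2/(1-θ) := by positivity
      linarith
    rw [div_le_iff₀ hθ0] at ha2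
    have h1 : d^2 ≤ a^2 := by nlinarith
    have hcpos : (0:ℝ) < 1+ε^2*θ*(1-θ) := by positivity
    have h2 : (1+ε^2*θ*(1-θ))*θ < 1 := by
      have hε2 : ε^2 < 1 := by nlinarith
      have hθ2 : θ^2 < 1 := by nlinarith
      have hp : ε^2*θ^2 ≤ ε^2 := by nlinarith [sq_nonneg ε, sq_nonneg θ]
      have h : ε^2*θ^2 < 1 := lt_of_le_of_lt hp hε2
      have h2m := mul_lt_mul_of_pos_right h h1θ
      have e : (1+ε^2*θ*(1-θ))*θ = θ + ε^2*θ^2*(1-θ) := by ring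
      rw [e]; linarith
    have h3 : d^2*((1+ε^2*θ*(1-θ))*θ) ≤ a^2*((1+ε^2*θ*(1-θ))*θ) :=
      mul_le_mul_of_nonneg_right h1 (by positivity)
    have h4 : a^2*((1+ε^2*θ*(1-θ))*θ) < a^2*1 :=
      mul_lt_mul_of_pos_left h2 (by positivity)
    have e2 : d^2*(1+ε^2*θ*(1-θ))*θ = d^2*((1+ε^2*θ*(1-θ))*θ) := by ring
    rw [e2] at ha2
    linarith

theorem stmt8 {X : Type*} [MetricSpace X] (φ : X → EReal) (lam : ℝ)
    (hbot : ∀ y, φ y ≠ ⊥) (hproper : ∃ y, φ y ≠ ⊤)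
    (hcompl : ∀ c : ℝ, IsComplete {y : X | φ y ≤ (c : EReal)})
    (hconv : ApproxLambdaConvexOn φ lam Set.univ)
    (o : X) (ho : φ o ≠ ⊤) :
    letI M : EReal := ⨅ x ∈ {x : X | dist x o ≤ 1}, φ x
    M ≠ ⊥ ∧
    (∀ κo : ℝ, -lam < κo → ∀ x : X,
      (((φ o).toReal - ((φ o).toReal - M.toReal + max lam 0 / 2) ^ 2 / (2 * (lam + κo))
          - (lam + κo) / 2 : ℝ) : EReal) ≤
        φ x + ((κo / 2 * dist x o ^ 2 : ℝ) : EReal)) ∧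
    (∀ x : X,
      ((M.toReal - max (-lam) 0 / 2 : ℝ) : EReal) ≤
        φ x - ((lam / 2 * dist x o ^ 2 : ℝ) : EReal) +
          ((((φ o).toReal - M.toReal + lam / 2) * dist x o : ℝ) : EReal)) := by
  set M : EReal := ⨅ x ∈ {x : X | dist x o ≤ 1}, φ x with hMdef
  set F := (φ o).toReal with hF
  have hFo : φ o = (F : EReal) := (EReal.coe_toReal ho (hbot o)).symm
  have hMle : ∀ x : X, dist x o ≤ 1 → M ≤ φ x := fun x hx => iInf₂_le x hx
  have hMF : M ≤ (F : EReal) := by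
    rw [← hFo]; exact hMle o (by simp)
  have hMtop : M ≠ ⊤ := fun h => EReal.coe_ne_top F (top_le_iff.mp (h ▸ hMF))
  -- usability of convexity
  have huse : ∀ (x₀ x₁ : X) (p q : ℝ), φ x₀ = (p:EReal) → φ x₁ = (q:EReal) →
      ∀ θ ∈ Set.Ioo (0:ℝ) 1, ∀ ε ∈ Set.Ioo (0:ℝ) 1, ∃ x' : X,
        dist x₀ x' ≤ θ * dist x₀ x₁ * (1+ε) ∧
        φ x' ≤ (((1-θ)*p + θ*q - (lam-ε)/2*(θ*(1-θ))*(dist x₀ x₁)^2 : ℝ) : EReal) := by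
    intro x₀ x₁ p q hp hq θ hθ ε hε
    obtain ⟨x', -, hint, hval⟩ := hconv x₀ (Set.mem_univ _) x₁ (Set.mem_univ _)
      (by rw [hp]; exact EReal.coe_ne_top p) (by rw [hq]; exact EReal.coe_ne_top q) θ hθ ε hε
    rw [hp, hq, ← EReal.coe_mul, ← EReal.coe_mul, ← EReal.coe_add, ← EReal.coe_sub] at hval
    refine ⟨x', ?_, hval⟩
    exact aux_dist hθ.1 hθ.2 hε.1 hε.2 dist_nonneg dist_nonneg dist_nonneg
      (dist_triangle x₀ x' x₁) hint
  have hMbot : M ≠ ⊥ := by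
    intro hMb
    have hex : ∀ c : ℝ, ∃ z : X, dist z o ≤ 1 ∧ φ z < (c : EReal) := by
      intro c
      have hlt : M < (c : EReal) := by
        rw [hMb]; exact bot_lt_iff_ne_bot.mpr (by simp)
      rw [hMdef] at hlt
      obtain ⟨z, hz⟩ := iInf_lt_iff.mp hlt
      obtain ⟨hzS, hz'⟩ := iInf_lt_iff.mp hz
      exact ⟨z, hzS, hz'⟩
    set Q : ℕ → X → Prop := fun n y => φ y ≤ ((F - n : ℝ) : EReal) ∧ dist y o ≤ 2 - (1/2:ℝ)^n
      with hQdef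
    have hQ0 : Q 0 o := by
      constructor
      · rw [hFo]; norm_num
      · simp
    have hstep : ∀ n (y : X), Q n y → ∃ y', Q (n+1) y' ∧ dist y y' ≤ (1/2:ℝ)^(n+1) := by
      intro n y hy
      obtain ⟨hy1, hy2⟩ := hy
      have hpow0 : (0:ℝ) < (1/2:ℝ)^(n+1) := by positivity
      have hpowle : ((1:ℝ)/2)^(n+1) ≤ 1/2 := by
        calc ((1:ℝ)/2)^(n+1) ≤ ((1:ℝ)/2)^1 :=
              pow_le_pow_of_le_one (by norm_num) (by norm_num) (by omega)
          _ = 1/2 := pow_one _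
      set θ : ℝ := (1/2:ℝ)^(n+1)/5 with hθdef
      have hθ0 : 0 < θ := by positivity
      have hθ1 : θ < 1 := by rw [hθdef]; linarith
      set C : ℝ := 2*(|lam|+1) with hCdef
      set c : ℝ := (F - n) - (1+C)/θ with hcdef
      obtain ⟨z, hz1, hz2⟩ := hex c
      have hytop : φ y ≠ ⊤ := fun h => EReal.coe_ne_top _ (top_le_iff.mp (h ▸ hy1))
      have hztop : φ z ≠ ⊤ := fun h => by rw [h] at hz2; exact (not_top_lt hz2)
      set p := (φ y).toReal with hpdef
      have hp : φ y = (p : EReal) := (EReal.coe_toReal hytop (hbot y)).symm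
      have hple : p ≤ F - n := by rw [hp] at hy1; exact_mod_cast hy1
      set q := (φ z).toReal with hqdef
      have hq : φ z = (q : EReal) := (EReal.coe_toReal hztop (hbot z)).symm
      have hqlt : q < c := by rw [hq] at hz2; exact_mod_cast hz2
      obtain ⟨x', hdist, hval⟩ := huse y z p q hp hq θ ⟨hθ0, hθ1⟩ (1/2)
        ⟨by norm_num, by norm_num⟩
      have hd0 : (0:ℝ) ≤ dist y z := dist_nonneg
      have hd3 : dist y z ≤ 3 := by
        have := dist_triangle y o z
        have h2 : dist o z ≤ 1 := by rw [dist_comm]; exact hz1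
        have hpn : (0:ℝ) < (1/2:ℝ)^n := by positivity
        linarith [this, h2, hy2, hpn]
      have hdyx : dist y x' ≤ (1/2:ℝ)^(n+1) := by
        have h1 : θ * dist y z * (1+1/2) ≤ θ * 3 * (3/2) := by nlinarith [hθ0.le]
        have h2 : θ * 3 * (3/2) ≤ 5*θ := by nlinarith [hθ0.le]
        have h3 : 5*θ = (1/2:ℝ)^(n+1) := by rw [hθdef]; ring
        linarith [hdist]
      -- value bound
      have hreal : (1-θ)*p + θ*q - (lam-1/2)/2*(θ*(1-θ))*(dist y z)^2 ≤ F - n - 1 := by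
        have h1 : (1-θ)*p ≤ (1-θ)*(F-n) :=
          mul_le_mul_of_nonneg_left hple (by linarith)
        have h2 : θ*q ≤ θ*c := mul_le_mul_of_nonneg_left hqlt.le hθ0.le
        have h3 : θ*c = θ*(F-(n:ℝ)) - (1+C) := by
          rw [hcdef, mul_sub, mul_div_cancel₀ _ (ne_of_gt hθ0)]
        have hθq : θ*(1-θ) ≤ 1/4 := by nlinarith [sq_nonneg (θ-1/2)]
        have hθqn : 0 ≤ θ*(1-θ) := by nlinarith
        have hd9 : (dist y z)^2 ≤ 9 := by nlinarith
        have ht0 : 0 ≤ θ*(1-θ)*(dist y z)^2 := by positivity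
        have ht9 : θ*(1-θ)*(dist y z)^2 ≤ 9/4 := by
          nlinarith [mul_le_mul hθq hd9 (sq_nonneg (dist y z)) (by norm_num : (0:ℝ) ≤ 1/4)]
        have hxabs : -((|lam|+1)/2) ≤ (lam-1/2)/2 := by linarith [neg_abs_le lam]
        have h4 : -C ≤ (lam-1/2)/2*(θ*(1-θ))*(dist y z)^2 := by
          have e : (lam-1/2)/2*(θ*(1-θ))*(dist y z)^2
              = ((lam-1/2)/2)*(θ*(1-θ)*(dist y z)^2) := by ring
          rw [e]
          have h5 : (-((|lam|+1)/2))*(θ*(1-θ)*(dist y z)^2)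
              ≤ ((lam-1/2)/2)*(θ*(1-θ)*(dist y z)^2) :=
            mul_le_mul_of_nonneg_right hxabs ht0
          have h6 : ((|lam|+1)/2)*(θ*(1-θ)*(dist y z)^2) ≤ ((|lam|+1)/2)*(9/4) :=
            mul_le_mul_of_nonneg_left ht9 (by positivity)
          have h7 : -C ≤ -(((|lam|+1)/2)*(9/4)) := by
            rw [hCdef]; nlinarith [abs_nonneg lam]
          nlinarith [h5, h6, h7]
        linarith [h1, h2, h3.le, h3.ge, h4]
      refine ⟨x', ⟨?_, ?_⟩, hdyx⟩
      · refine le_trans hval (EReal.coe_le_coe_iff.mpr ?_)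
        push_cast
        linarith [hreal]
      · have := dist_triangle x' y o
        have hxy : dist x' y ≤ (1/2:ℝ)^(n+1) := by rw [dist_comm]; exact hdyx
        have hps : ((1:ℝ)/2)^n = 2 * (1/2:ℝ)^(n+1) := by
          rw [pow_succ]; ring
        rw [hps] at hy2
        linarith
    choose nxt hQs hds using hstep
    let g : (n : ℕ) → {y : X // Q n y} :=
      fun n => Nat.rec ⟨o, hQ0⟩ (fun k p => ⟨nxt k p.1 p.2, hQs k p.1 p.2⟩) n
    have hgd : ∀ n, dist (g n).1 (g (n+1)).1 ≤ (1/2:ℝ) * (1/2:ℝ)^n := by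
      intro n
      have := hds n (g n).1 (g n).2
      rw [pow_succ] at this
      calc dist (g n).1 (g (n+1)).1 = dist (g n).1 (nxt n (g n).1 (g n).2) := rfl
        _ ≤ (1/2:ℝ)^n * (1/2) := this
        _ = (1/2:ℝ) * (1/2)^n := by ring
    have hcauchy : CauchySeq (fun n => (g n).1) :=
      cauchySeq_of_le_geometric (1/2) (1/2) (by norm_num) hgd
    have hmem : ∀ n, (g n).1 ∈ {y : X | φ y ≤ ((F:ℝ) : EReal)} := by
      intro n
      refine le_trans (g n).2.1 (EReal.coe_le_coe_iff.mpr ?_)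
      have : (0:ℝ) ≤ n := Nat.cast_nonneg n
      linarith
    obtain ⟨y, hyS, hy⟩ := cauchySeq_tendsto_of_isComplete (hcompl F) hmem hcauchy
    have hyk : ∀ k : ℕ, φ y ≤ ((F - k : ℝ) : EReal) := by
      intro k
      refine (hcompl (F - k)).isClosed.mem_of_tendsto hy ?_
      rw [Filter.eventually_atTop]
      refine ⟨k, fun n hn => ?_⟩
      refine le_trans (g n).2.1 (EReal.coe_le_coe_iff.mpr ?_)
      have : (k:ℝ) ≤ n := Nat.cast_le.mpr hn
      linarith
    have hytop : φ y ≠ ⊤ := by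
      intro h
      have := hyk 0
      rw [h] at this
      exact EReal.coe_ne_top _ (top_le_iff.mp this)
    have hyr : φ y = ((φ y).toReal : EReal) := (EReal.coe_toReal hytop (hbot y)).symm
    obtain ⟨k, hk⟩ := exists_nat_gt (F - (φ y).toReal)
    have := hyk k
    rw [hyr] at this
    rw [EReal.coe_le_coe_iff] at this
    linarith
  set m := M.toReal with hmdef
  have hMm : M = (m : EReal) := (EReal.coe_toReal hMtop hMbot).symm
  have hmF : m ≤ F := by
    rw [hMm] at hMF; exact_mod_cast hMF
  have hkeyB : ∀ x : X, 1 ≤ dist x o → ∀ p : ℝ, φ x = (p:EReal) →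
      F + (dist x o)*(m - F) + lam*((dist x o)^2 - dist x o)/2 ≤ p := by
    intro x hd1 p hp
    set d := dist x o with hddef
    have hd0 : (0:ℝ) < d := lt_of_lt_of_le one_pos hd1
    have hg : ∀ ε ∈ Set.Ioo (0:ℝ) 1,
        F + (d*(1+ε))*(m - F) + (lam-ε)*(d^2 - d/(1+ε))/2 ≤ p := by
      intro ε hε
      obtain ⟨hε0, hε1⟩ := hε
      have hD0 : (0:ℝ) < d*(1+ε) := by nlinarith
      set θ : ℝ := (d*(1+ε))⁻¹ with hθdef
      have hθ0 : 0 < θ := by positivity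
      have hθD : θ*(d*(1+ε)) = 1 := inv_mul_cancel₀ (ne_of_gt hD0)
      have hθ1 : θ < 1 := by
        have h1 : 1 < d*(1+ε) := by nlinarith
        rw [hθdef]
        exact inv_lt_one_of_one_lt₀ h1
      obtain ⟨x', hdist, hval⟩ := huse o x F p hFo hp θ ⟨hθ0, hθ1⟩ ε ⟨hε0, hε1⟩
      have hdox : dist o x = d := by rw [dist_comm]
      rw [hdox] at hdist hval
      have hx'1 : dist x' o ≤ 1 := by
        rw [dist_comm]
        calc dist o x' ≤ θ * d * (1+ε) := hdist
          _ = θ * (d*(1+ε)) := by ring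
          _ = 1 := hθD
      have hmx' : (m:EReal) ≤ φ x' := hMm ▸ hMle x' hx'1
      have hre : m ≤ (1-θ)*F + θ*p - (lam-ε)/2*(θ*(1-θ))*d^2 := by
        exact_mod_cast le_trans hmx' hval
      have h5 := mul_le_mul_of_nonneg_left hre hD0.le
      have e : (d*(1+ε)) * ((1-θ)*F + θ*p - (lam-ε)/2*(θ*(1-θ))*d^2)
          = (d*(1+ε))*F - (θ*(d*(1+ε)))*F + (θ*(d*(1+ε)))*p
            - (lam-ε)/2*((θ*(d*(1+ε)))*(1-θ))*d^2 := by ring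
      rw [hθD, one_mul, one_mul, one_mul] at e
      rw [e] at h5
      have e2 : d/(1+ε) = θ*d^2 := by
        rw [hθdef]
        field_simp
      rw [e2]
      linarith [h5]
    have hc : ContinuousAt
        (fun ε : ℝ => F + (d*(1+ε))*(m - F) + (lam-ε)*(d^2 - d/(1+ε))/2) 0 := by
      have h2 : ContinuousAt (fun ε : ℝ => d/(1+ε)) 0 :=
        ContinuousAt.div continuousAt_const (by fun_prop) (by norm_num)
      have h3 : ContinuousAt (fun ε : ℝ => (d*(1+ε))*(m - F)) 0 := by fun_prop
      have h4 : ContinuousAt (fun ε : ℝ => (lam-ε)*(d^2 - d/(1+ε))/2) 0 :=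
        (((continuousAt_const.sub continuousAt_id).mul
          (continuousAt_const.sub h2))).div_const 2
      exact (continuousAt_const.add h3).add h4
    have hval0 : F + (d*(1+0))*(m - F) + (lam-0)*(d^2 - d/(1+0))/2
        = F + d*(m - F) + lam*(d^2 - d)/2 := by norm_num
    have htend : Filter.Tendsto
        (fun ε : ℝ => F + (d*(1+ε))*(m - F) + (lam-ε)*(d^2 - d/(1+ε))/2)
        (nhdsWithin 0 (Set.Ioi 0)) (nhds (F + d*(m - F) + lam*(d^2 - d)/2)) := by
      have := hc.continuousWithinAt (s := Set.Ioi 0)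
      rw [ContinuousWithinAt] at this
      rw [← hval0]
      exact this
    refine le_of_tendsto htend ?_
    exact Filter.eventually_of_mem (Ioo_mem_nhdsGT_of_mem (by norm_num)) hg
  refine ⟨hMbot, ?_, ?_⟩
  · -- quadratic bound
    intro κo hκ x
    have hμ : 0 < lam + κo := by linarith
    set d := dist x o with hddef
    set lp := max lam 0 with hlpdef
    have hlp0 : 0 ≤ lp := le_max_right _ _
    have hlplam : lam ≤ lp := le_max_left _ _
    by_cases hx : φ x = ⊤
    · rw [hx, EReal.top_add_coe]
      exact le_top
    · have hp : φ x = ((φ x).toReal : EReal) := (EReal.coe_toReal hx (hbot x)).symm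
      set p := (φ x).toReal with hpdef
      rw [hp, ← EReal.coe_add, EReal.coe_le_coe_iff]
      have hd0 : (0:ℝ) ≤ d := dist_nonneg
      have hAM : (F - m + lp/2) ≤ (F - m + lp/2)^2/(2*(lam+κo)) + (lam+κo)/2 := by
        have e : (F - m + lp/2)^2/(2*(lam+κo)) + (lam+κo)/2 - (F - m + lp/2)
            = (F - m + lp/2 - (lam+κo))^2/(2*(lam+κo)) := by
          field_simp
          ring
        have hnn : 0 ≤ (F - m + lp/2 - (lam+κo))^2/(2*(lam+κo)) := by positivity
        linarith [e.le, e.ge, hnn]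
      rcases le_or_gt d 1 with hdle | hdgt
      · have hmp : m ≤ p := by
          have hh := hMle x hdle
          rw [hMm, hp] at hh
          exact_mod_cast hh
        rcases le_or_gt 0 κo with hκ0 | hκ0
        · have hκd : 0 ≤ κo/2*d^2 := by positivity
          linarith [hAM]
        · have hlam0 : 0 < lam := by linarith
          have hlpe : lp = lam := max_eq_left hlam0.le
          have hd2 : (0:ℝ) ≤ 1 - d^2 := by nlinarith
          have hκd : κo/2 ≤ κo/2*d^2 := by nlinarith [mul_nonneg (by linarith : (0:ℝ) ≤ -κo) hd2]
          rw [hlpe] at hAM ⊢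
          linarith [hAM, hκd, hmp]
      · have hp' := hkeyB x hdgt.le p hp
        have h6 : 0 ≤ (lp - lam)/2 * d := mul_nonneg (by linarith) hd0
        have h7 : 0 ≤ (lam+κo)*d^2/2 - (F-m+lp/2)*d + (F-m+lp/2)^2/(2*(lam+κo)) := by
          have e : (lam+κo)*d^2/2 - (F-m+lp/2)*d + (F-m+lp/2)^2/(2*(lam+κo))
              = ((lam+κo)*d - (F-m+lp/2))^2/(2*(lam+κo)) := by
            field_simp
            ring
          rw [e]
          positivity
        linarith [hp', h6, h7]
  · -- linear bound
    intro x
    set d := dist x o with hddef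
    set lm := max (-lam) 0 with hlmdef
    have hlm0 : 0 ≤ lm := le_max_right _ _
    have hlmlam : -lam ≤ lm := le_max_left _ _
    by_cases hx : φ x = ⊤
    · rw [hx, EReal.top_sub_coe, EReal.top_add_coe]
      exact le_top
    · have hp : φ x = ((φ x).toReal : EReal) := (EReal.coe_toReal hx (hbot x)).symm
      set p := (φ x).toReal with hpdef
      rw [hp, ← EReal.coe_sub, ← EReal.coe_add, EReal.coe_le_coe_iff]
      have hd0 : (0:ℝ) ≤ d := dist_nonneg
      rcases le_or_gt d 1 with hdle | hdgt
      · have hmp : m ≤ p := by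
          have hh := hMle x hdle
          rw [hMm, hp] at hh
          exact_mod_cast hh
        have hq1 : 0 ≤ (F - m)*d := mul_nonneg (by linarith) hd0
        have hq2 : 0 ≤ (lam + lm)*(d*(1-d))/2 :=
          div_nonneg (mul_nonneg (by linarith) (mul_nonneg hd0 (by linarith))) (by norm_num)
        have hq3 : 0 ≤ lm*(1 - d*(1-d))/2 := by
          have : d*(1-d) ≤ 1 := by nlinarith
          have h1 : 0 ≤ lm*(1 - d*(1-d)) := mul_nonneg hlm0 (by linarith)
          linarith
        linarith [hmp, hq1, hq2, hq3]
      · have hp' := hkeyB x hdgt.le p hp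
        linarith [hp', hmF, hlm0]
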